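/- (Theorem 3.2, model-error bound.) Let κ̂ and κ* be Markov kernels on a measurable space X, let μ̂ be a probability measure invariant for κ̂, let μ* be a probability measure invariant for κ*, and let μ_b be a probability measure on X. Let G be a nonempty class of measurable functions g : X → ℝ with |g| ≤ G_max pointwise. Suppose Φ assigns to each g ∈ G a measurable function Φg with |Φg| ≤ F pointwise satisfying Φg(x) = g(x) + (κ̂ Φg)(x) − ∫ g dμ̂ for all x; for g ∈ G set e_g(x) := (κ̂ Φg)(x) − (κ* Φg)(x); and suppose Ψ assigns to each g ∈ G a bounded measurable function Ψg satisfying Ψg(x) = e_g(x) + (κ* Ψg)(x) − ∫ e_g dμ* for all x. Assume KL(κ*(x)‖κ̂(x)) < ∞ for μ_b-almost every x and that x ↦ √(2 · KL(κ*(x)‖κ̂(x))) is μ_b-integrable. Then sup_{g ∈ G} | ∫ g dμ̂ − ∫ g dμ* | ≤ F · ∫ √(2 · KL(κ*(x)‖κ̂(x))) dμ_b(x) + sup_{g ∈ G} | ∫ Ψg dμ_b − ∫ (κ* Ψg)(x) dμ_b(x) |. -/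

import Mathlib

open MeasureTheory ProbabilityTheory Classical
open scoped ENNReal

/-- The Kullback–Leibler divergence `KL(P‖Q)`: equal to `∫ log (dP/dQ) dP` when `P ≪ Q`
and this integral makes sense, and `+∞` otherwise. -/
noncomputable def KLdiv {S : Type*} [MeasurableSpace S] (P Q : Measure S) : ℝ≥0∞ :=
  if P ≪ Q ∧ Integrable (fun s => Real.log ((P.rnDeriv Q s).toReal)) P then
    ENNReal.ofReal (∫ s, Real.log ((P.rnDeriv Q s).toReal) ∂P)
  else ⊤

lemma phi_nonneg {x : ℝ} (hx : 0 ≤ x) : 0 ≤ x * Real.log x - x + 1 := by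
  rcases eq_or_lt_of_le hx with h0 | h0
  · simp [← h0]
  · have h := Real.one_sub_inv_le_log_of_pos h0
    have h2 : x * (1 - x⁻¹) ≤ x * Real.log x :=
      mul_le_mul_of_nonneg_left h hx
    rw [mul_sub, mul_one, mul_inv_cancel₀ h0.ne'] at h2
    linarith

lemma key_ineq {x : ℝ} (hx : 0 ≤ x) :
    3 * (x - 1) ^ 2 ≤ (2 * x + 4) * (x * Real.log x - x + 1) := by
  rcases eq_or_lt_of_le hx with h0 | h0
  · simp [← h0]; norm_num
  set g : ℝ → ℝ := fun y => (2 * y + 4) * (y * Real.log y - y + 1) - 3 * (y - 1) ^ 2 with hg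
  set u : ℝ → ℝ := fun y => (y + 1) * Real.log y - 2 * (y - 1) with hu
  have hderivu : ∀ y : ℝ, 0 < y → HasDerivAt u (Real.log y + y⁻¹ - 1) y := by
    intro y hy
    have hlog := Real.hasDerivAt_log hy.ne'
    have h1 : HasDerivAt (fun z : ℝ => (z + 1) * Real.log z)
        (1 * Real.log y + (y + 1) * y⁻¹) y :=
      ((hasDerivAt_id y).add_const 1).mul hlog
    have h2 : HasDerivAt (fun z : ℝ => 2 * (z - 1)) 2 y := by
      simpa using ((hasDerivAt_id y).sub_const 1).const_mul 2
    have := h1.sub h2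
    refine this.congr_deriv ?_
    field_simp
    ring
  have hderivg : ∀ y : ℝ, 0 < y → HasDerivAt g (4 * u y) y := by
    intro y hy
    have hlog := Real.hasDerivAt_log hy.ne'
    have hyl : HasDerivAt (fun z : ℝ => z * Real.log z) (Real.log y + 1) y := by
      have := (hasDerivAt_id y).mul hlog
      refine this.congr_deriv ?_
      field_simp
      rw [id_eq]; ring
    have hφ : HasDerivAt (fun z : ℝ => z * Real.log z - z + 1) (Real.log y) y := by
      simpa using (hyl.sub (hasDerivAt_id y)).add_const 1
    have hlin : HasDerivAt (fun z : ℝ => 2 * z + 4) 2 y := by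
      simpa using ((hasDerivAt_id y).const_mul 2).add_const 4
    have hq : HasDerivAt (fun z : ℝ => 3 * (z - 1) ^ 2) (3 * (2 * (y - 1))) y := by
      simpa using (((hasDerivAt_id y).sub_const 1).pow 2).const_mul 3
    have := (hlin.mul hφ).sub hq
    refine this.congr_deriv ?_
    simp only [hu]
    ring
  have hucont : ContinuousOn u (Set.Ioi (0 : ℝ)) := by
    intro y hy
    exact ((hderivu y hy).continuousAt).continuousWithinAt
  have hgcont : ContinuousOn g (Set.Ioi (0 : ℝ)) := by
    intro y hy
    exact ((hderivg y hy).continuousAt).continuousWithinAt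
  have humono : MonotoneOn u (Set.Ioi (0 : ℝ)) := by
    apply monotoneOn_of_deriv_nonneg (convex_Ioi 0) hucont
    · intro y hy
      rw [interior_Ioi] at hy
      exact (hderivu y hy).differentiableAt.differentiableWithinAt
    · intro y hy
      rw [interior_Ioi] at hy
      rw [(hderivu y hy).deriv]
      have := Real.one_sub_inv_le_log_of_pos hy
      linarith
  have hu1 : u 1 = 0 := by simp [hu]
  have hg1 : g 1 = 0 := by simp [hg]
  have hgmono : MonotoneOn g (Set.Ici (1 : ℝ)) := by
    apply monotoneOn_of_deriv_nonneg (convex_Ici 1)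
      (hgcont.mono (fun y hy => Set.mem_Ioi.2 (lt_of_lt_of_le one_pos hy)))
    · intro y hy
      rw [interior_Ici] at hy
      exact (hderivg y (lt_trans one_pos hy)).differentiableAt.differentiableWithinAt
    intro y hy
    rw [interior_Ici] at hy
    rw [(hderivg y (lt_trans one_pos hy)).deriv]
    have : u 1 ≤ u y := humono (Set.mem_Ioi.2 one_pos) (Set.mem_Ioi.2 (lt_trans one_pos hy))
      hy.le
    rw [hu1] at this
    linarith
  have hganti : AntitoneOn g (Set.Ioc (0 : ℝ) 1) := by
    apply antitoneOn_of_deriv_nonpos (convex_Ioc 0 1)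
      (hgcont.mono (fun y hy => hy.1))
    · intro y hy
      rw [interior_Ioc] at hy
      exact (hderivg y hy.1).differentiableAt.differentiableWithinAt
    intro y hy
    rw [interior_Ioc] at hy
    rw [(hderivg y hy.1).deriv]
    have : u y ≤ u 1 := humono (Set.mem_Ioi.2 hy.1) (Set.mem_Ioi.2 one_pos) hy.2.le
    rw [hu1] at this
    linarith
  have hgx : 0 ≤ g x := by
    rcases le_or_gt x 1 with hx1 | hx1
    · have := hganti (Set.mem_Ioc.2 ⟨h0, hx1⟩) (Set.mem_Ioc.2 ⟨one_pos, le_refl 1⟩) hx1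
      rw [hg1] at this; exact this
    · have := hgmono (Set.mem_Ici.2 (le_refl 1)) (Set.mem_Ici.2 hx1.le) hx1.le
      rw [hg1] at this; exact this
  simp only [hg] at hgx
  linarith

lemma abs_key {x t : ℝ} (hx : 0 ≤ x) (ht : 0 < t) :
    |x - 1| ≤ (t / 3) * (x + 2) + (1 / (2 * t)) * (x * Real.log x - x + 1) := by
  have k := key_ineq hx
  have hφ := phi_nonneg hx
  set φ := x * Real.log x - x + 1 with hφdef
  have hrw : (t / 3) * (x + 2) + (1 / (2 * t)) * φ = (2 * t ^ 2 * (x + 2) + 3 * φ) / (6 * t) := by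
    field_simp
    ring
  rw [hrw, le_div_iff₀ (by positivity)]
  have hk2 : 3 * t ^ 2 * (x - 1) ^ 2 ≤ t ^ 2 * ((2 * x + 4) * φ) := by nlinarith [sq_nonneg t]
  have hab : (6 * t * (x - 1)) ^ 2 ≤ (2 * t ^ 2 * (x + 2) + 3 * φ) ^ 2 := by
    nlinarith [sq_nonneg (2 * t ^ 2 * (x + 2) - 3 * φ), hk2]
  have hab0 : 0 ≤ 2 * t ^ 2 * (x + 2) + 3 * φ :=
    add_nonneg (mul_nonneg (by positivity) (by linarith)) (by linarith)
  rcases le_or_gt 1 x with h1 | h1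
  · rw [abs_of_nonneg (by linarith)]
    nlinarith [hab, hab0, mul_pos ht ht]
  · rw [abs_of_neg (by linarith)]
    nlinarith [hab, hab0, mul_pos ht ht]

section KernelAux
variable {X : Type*} [MeasurableSpace X]

lemma integrable_of_abs_le' {ν : Measure X} [IsFiniteMeasure ν] {f : X → ℝ} (hf : Measurable f)
    {C : ℝ} (hb : ∀ x, |f x| ≤ C) : Integrable f ν :=
  Integrable.mono' (integrable_const C) hf.aestronglyMeasurable
    (Filter.Eventually.of_forall fun x => by simpa [Real.norm_eq_abs] using hb x)

lemma measurable_kernel_integral (κ : Kernel X X) [IsSFiniteKernel κ] {f : X → ℝ}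
    (hf : Measurable f) : Measurable fun x => ∫ y, f y ∂κ x :=
  (StronglyMeasurable.integral_kernel_prod_right' (κ := κ)
    ((hf.comp measurable_snd).stronglyMeasurable)).measurable

lemma abs_kernel_integral_le (κ : Kernel X X) [IsMarkovKernel κ] {f : X → ℝ} {C : ℝ}
    (hb : ∀ x, |f x| ≤ C) (x : X) : |∫ y, f y ∂κ x| ≤ C := by
  have := norm_integral_le_of_norm_le_const (μ := κ x) (f := f) (C := C)
    (Filter.Eventually.of_forall fun y => by simpa [Real.norm_eq_abs] using hb y)
  simpa [Real.norm_eq_abs, measure_univ] using this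

lemma integral_bind_of_bounded (μ : Measure X) [IsProbabilityMeasure μ] (κ : Kernel X X)
    [IsMarkovKernel κ] {f : X → ℝ} (hf : Measurable f) {C : ℝ} (hb : ∀ x, |f x| ≤ C) :
    ∫ y, f y ∂(μ.bind κ) = ∫ x, ∫ y, f y ∂κ x ∂μ := by
  haveI : Nonempty X := by
    by_contra h
    rw [not_nonempty_iff] at h
    have h1 : μ Set.univ = 1 := measure_univ
    rw [Set.univ_eq_empty_iff.2 h] at h1
    simp at h1
  have hC : 0 ≤ C := le_trans (abs_nonneg _) (hb (Classical.arbitrary X))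
  haveI : IsProbabilityMeasure (μ.bind κ) := by
    constructor
    rw [Measure.bind_apply MeasurableSet.univ κ.measurable.aemeasurable]
    simp
  set fp : X → ℝ≥0∞ := fun x => ENNReal.ofReal (f x) with hfpdef
  set fm : X → ℝ≥0∞ := fun x => ENNReal.ofReal (-f x) with hfmdef
  have hfp : Measurable fp := hf.ennreal_ofReal
  have hfm : Measurable fm := hf.neg.ennreal_ofReal
  have hfpC : ∀ x, fp x ≤ ENNReal.ofReal C := fun x =>
    ENNReal.ofReal_le_ofReal (le_trans (le_abs_self _) (hb x))
  have hfmC : ∀ x, fm x ≤ ENNReal.ofReal C := fun x =>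
    ENNReal.ofReal_le_ofReal (le_trans (neg_le_abs _) (hb x))
  have key : ∀ (ν : Measure X), IsProbabilityMeasure ν →
      ∫ y, f y ∂ν = (∫⁻ y, fp y ∂ν).toReal - (∫⁻ y, fm y ∂ν).toReal := fun ν hν =>
    integral_eq_lintegral_pos_part_sub_lintegral_neg_part (integrable_of_abs_le' hf hb)
  -- inner lintegral bounds
  have hlintA : ∀ x, ∫⁻ y, fp y ∂κ x ≤ ENNReal.ofReal C := fun x => by
    calc ∫⁻ y, fp y ∂κ x ≤ ∫⁻ _y, ENNReal.ofReal C ∂κ x := lintegral_mono hfpC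
      _ = ENNReal.ofReal C := by simp [measure_univ]
  have hlintB : ∀ x, ∫⁻ y, fm y ∂κ x ≤ ENNReal.ofReal C := fun x => by
    calc ∫⁻ y, fm y ∂κ x ≤ ∫⁻ _y, ENNReal.ofReal C ∂κ x := lintegral_mono hfmC
      _ = ENNReal.ofReal C := by simp [measure_univ]
  have hmeasA : Measurable fun x => ∫⁻ y, fp y ∂κ x :=
    Measurable.lintegral_kernel_prod_right' (κ := κ) (hfp.comp measurable_snd)
  have hmeasB : Measurable fun x => ∫⁻ y, fm y ∂κ x :=
    Measurable.lintegral_kernel_prod_right' (κ := κ) (hfm.comp measurable_snd)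
  have hAfin : ∀ᵐ x ∂μ, (∫⁻ y, fp y ∂κ x) < ⊤ :=
    Filter.Eventually.of_forall fun x => lt_of_le_of_lt (hlintA x) ENNReal.ofReal_lt_top
  have hBfin : ∀ᵐ x ∂μ, (∫⁻ y, fm y ∂κ x) < ⊤ :=
    Filter.Eventually.of_forall fun x => lt_of_le_of_lt (hlintB x) ENNReal.ofReal_lt_top
  have hintA : Integrable (fun x => (∫⁻ y, fp y ∂κ x).toReal) μ :=
    integrable_of_abs_le' hmeasA.ennreal_toReal (C := C) fun x => by
      rw [abs_of_nonneg ENNReal.toReal_nonneg]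
      exact le_trans (ENNReal.toReal_mono ENNReal.ofReal_ne_top (hlintA x))
        (by rw [ENNReal.toReal_ofReal hC])
  have hintB : Integrable (fun x => (∫⁻ y, fm y ∂κ x).toReal) μ :=
    integrable_of_abs_le' hmeasB.ennreal_toReal (C := C) fun x => by
      rw [abs_of_nonneg ENNReal.toReal_nonneg]
      exact le_trans (ENNReal.toReal_mono ENNReal.ofReal_ne_top (hlintB x))
        (by rw [ENNReal.toReal_ofReal hC])
  have hrhs : ∫ x, ∫ y, f y ∂κ x ∂μ
      = (∫⁻ x, ∫⁻ y, fp y ∂κ x ∂μ).toReal - (∫⁻ x, ∫⁻ y, fm y ∂κ x ∂μ).toReal := by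
    have h1 : ∫ x, ∫ y, f y ∂κ x ∂μ
        = ∫ x, ((∫⁻ y, fp y ∂κ x).toReal - (∫⁻ y, fm y ∂κ x).toReal) ∂μ :=
      integral_congr_ae (Filter.Eventually.of_forall fun x => key (κ x) inferInstance)
    rw [h1, integral_sub hintA hintB,
      integral_toReal hmeasA.aemeasurable hAfin, integral_toReal hmeasB.aemeasurable hBfin]
  rw [key (μ.bind κ) inferInstance, hrhs,
    Measure.lintegral_bind κ.measurable.aemeasurable hfp.aemeasurable, Measure.lintegral_bind κ.measurable.aemeasurable hfm.aemeasurable]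

lemma integral_invariant {κ : Kernel X X} [IsMarkovKernel κ] {μ : Measure X}
    [IsProbabilityMeasure μ] (h : Kernel.Invariant κ μ) {f : X → ℝ} (hf : Measurable f)
    {C : ℝ} (hb : ∀ x, |f x| ≤ C) :
    ∫ x, ∫ y, f y ∂κ x ∂μ = ∫ x, f x ∂μ := by
  conv_rhs => rw [← h.def]
  exact (integral_bind_of_bounded μ κ hf hb).symm

end KernelAux

section Pinsker
variable {X : Type*} [MeasurableSpace X]

lemma integrable_of_abs_le {ν : Measure X} [IsFiniteMeasure ν] {f : X → ℝ} (hf : Measurable f)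
    {C : ℝ} (hb : ∀ x, |f x| ≤ C) : Integrable f ν :=
  Integrable.mono' (integrable_const C) hf.aestronglyMeasurable
    (Filter.Eventually.of_forall fun x => by simpa [Real.norm_eq_abs] using hb x)

lemma pinsker_bound (P Q : Measure X) [IsProbabilityMeasure P] [IsProbabilityMeasure Q]
    (hPQ : P ≪ Q) (hint : Integrable (fun s => Real.log ((P.rnDeriv Q s).toReal)) P)
    {f : X → ℝ} (hf : Measurable f) {F : ℝ} (hF : 0 ≤ F) (hfb : ∀ x, |f x| ≤ F) :
    |(∫ x, f x ∂P) - ∫ x, f x ∂Q| ≤ F * Real.sqrt (2 * (KLdiv P Q).toReal) := by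
  set ρ : X → ℝ := fun x => (P.rnDeriv Q x).toReal with hρdef
  have hρmeas : Measurable ρ := (Measure.measurable_rnDeriv P Q).ennreal_toReal
  have hρ0 : ∀ x, 0 ≤ ρ x := fun x => ENNReal.toReal_nonneg
  have hρint : Integrable ρ Q := Measure.integrable_toReal_rnDeriv
  have hρ1 : ∫ x, ρ x ∂Q = 1 := by
    rw [hρdef, Measure.integral_toReal_rnDeriv hPQ]; simp
  have hKint : Integrable (fun x => ρ x * Real.log (ρ x)) Q := by
    have := (MeasureTheory.integrable_rnDeriv_smul_iff hPQ
      (f := fun s => Real.log (ρ s))).mpr hint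
    simpa [smul_eq_mul] using this
  set K := ∫ x, ρ x * Real.log (ρ x) ∂Q with hKdef
  have hchg : ∀ g : X → ℝ, ∫ x, g x ∂P = ∫ x, ρ x * g x ∂Q := by
    intro g
    rw [← MeasureTheory.integral_rnDeriv_smul hPQ]
    simp [smul_eq_mul]
    rfl
  have hKL' : ∫ x, Real.log (ρ x) ∂P = K := hchg _
  have hsubint : Integrable (fun x => ρ x * Real.log (ρ x) - ρ x) Q := hKint.sub hρint
  have hφint : Integrable (fun x => ρ x * Real.log (ρ x) - ρ x + 1) Q :=
    hsubint.add (integrable_const 1)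
  have hφ_integral : ∫ x, (ρ x * Real.log (ρ x) - ρ x + 1) ∂Q = K := by
    rw [integral_add hsubint (integrable_const 1),
      integral_sub hKint hρint, hρ1]
    simp
    rfl
  have hK0 : 0 ≤ K := by
    rw [← hφ_integral]
    exact integral_nonneg fun x => phi_nonneg (hρ0 x)
  have hKLval : (KLdiv P Q).toReal = K := by
    rw [KLdiv, if_pos ⟨hPQ, hint⟩]
    have : ∫ s, Real.log ((P.rnDeriv Q s).toReal) ∂P = K := hKL'
    rw [this, ENNReal.toReal_ofReal hK0]
  set E := ∫ x, |ρ x - 1| ∂Q with hEdef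
  have hEint : Integrable (fun x => |ρ x - 1|) Q := (hρint.sub (integrable_const 1)).abs
  have hE0 : 0 ≤ E := integral_nonneg fun x => abs_nonneg _
  have hfiQ : Integrable f Q := integrable_of_abs_le hf hfb
  have hρfi : Integrable (fun x => ρ x * f x) Q := by
    refine Integrable.mono' (hρint.const_mul F) ((hρmeas.mul hf).aestronglyMeasurable)
      (Filter.Eventually.of_forall fun x => ?_)
    rw [Real.norm_eq_abs, abs_mul, abs_of_nonneg (hρ0 x)]
    calc ρ x * |f x| ≤ ρ x * F := mul_le_mul_of_nonneg_left (hfb x) (hρ0 x)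
      _ = F * ρ x := mul_comm _ _
  have hstep1 : |(∫ x, f x ∂P) - ∫ x, f x ∂Q| ≤ F * E := by
    rw [hchg f, ← integral_sub hρfi hfiQ]
    calc |∫ x, (ρ x * f x - f x) ∂Q| ≤ ∫ x, |ρ x * f x - f x| ∂Q :=
          by simpa [Real.norm_eq_abs] using
            norm_integral_le_integral_norm (μ := Q) (fun x => ρ x * f x - f x)
      _ ≤ ∫ x, F * |ρ x - 1| ∂Q := by
          refine integral_mono (hρfi.sub hfiQ).abs (hEint.const_mul F) fun x => ?_
          have : ρ x * f x - f x = (ρ x - 1) * f x := by ring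
          rw [this, abs_mul, mul_comm]
          exact mul_le_mul_of_nonneg_right (hfb x) (abs_nonneg _)
      _ = F * E := by rw [integral_const_mul]
  have hEt : ∀ t : ℝ, 0 < t → E ≤ t + K / (2 * t) := by
    intro t ht
    have hsum : Integrable (fun x => ρ x + 2) Q := hρint.add (integrable_const 2)
    have hint2a : Integrable (fun x => (t / 3) * (ρ x + 2)) Q := hsum.const_mul (t / 3)
    have hint2b : Integrable (fun x => (1 / (2 * t)) * (ρ x * Real.log (ρ x) - ρ x + 1)) Q :=
      hφint.const_mul (1 / (2 * t))
    have hint2 : Integrable (fun x => (t / 3) * (ρ x + 2)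
        + (1 / (2 * t)) * (ρ x * Real.log (ρ x) - ρ x + 1)) Q := hint2a.add hint2b
    have hmono : E ≤ ∫ x, ((t / 3) * (ρ x + 2)
        + (1 / (2 * t)) * (ρ x * Real.log (ρ x) - ρ x + 1)) ∂Q :=
      integral_mono hEint hint2 fun x => abs_key (hρ0 x) ht
    rw [integral_add hint2a hint2b, integral_const_mul, integral_const_mul,
      integral_add hρint (integrable_const 2), hρ1, hφ_integral] at hmono
    have h2 : ∫ _x, (2 : ℝ) ∂Q = 2 := by simp
    rw [h2] at hmono
    calc E ≤ t / 3 * (1 + 2) + 1 / (2 * t) * K := hmono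
      _ = t + K / (2 * t) := by field_simp; ring
  have hE2 : E ≤ Real.sqrt (2 * K) := by
    rcases eq_or_lt_of_le hK0 with hK | hK
    · have hEle : ∀ t : ℝ, 0 < t → E ≤ t := by
        intro t ht
        have := hEt t ht
        rw [← hK] at this
        simpa using this
      have : E ≤ 0 := by
        by_contra h
        push_neg at h
        have := hEle (E / 2) (by linarith)
        linarith
      rw [← hK]
      simpa using this
    · set t := Real.sqrt (K / 2) with htdef
      have ht : 0 < t := Real.sqrt_pos.2 (by linarith)
      have ht2 : t ^ 2 = K / 2 := Real.sq_sqrt (by linarith)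
      have hKt : K = 2 * t ^ 2 := by linarith
      have hsqrt : Real.sqrt (2 * K) = 2 * t := by
        rw [hKt, show (2 : ℝ) * (2 * t ^ 2) = (2 * t) ^ 2 by ring]
        exact Real.sqrt_sq (by positivity)
      have := hEt t ht
      rw [hsqrt]
      have hrw : t + K / (2 * t) = 2 * t := by
        rw [hKt]
        field_simp
        ring
      linarith [hrw ▸ this]
  calc |(∫ x, f x ∂P) - ∫ x, f x ∂Q| ≤ F * E := hstep1
    _ ≤ F * Real.sqrt (2 * K) := mul_le_mul_of_nonneg_left hE2 hF
    _ = F * Real.sqrt (2 * (KLdiv P Q).toReal) := by rw [hKLval]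

end Pinsker

lemma KLdiv_lt_top_elim {S : Type*} [MeasurableSpace S] {P Q : Measure S}
    (h : KLdiv P Q < ⊤) :
    P ≪ Q ∧ Integrable (fun s => Real.log ((P.rnDeriv Q s).toReal)) P := by
  by_contra hc
  rw [KLdiv, if_neg hc] at h
  exact absurd h (lt_irrefl ⊤)



/-- Theorem 3.2 (model-error bound): the IPM between the stationary distribution `μ̂` of
the learned dynamics `κ̂` and the stationary distribution `μ*` of the true dynamics `κ*`
is bounded by an expected square-root-KL model-error term plus an auxiliary
Bellman-residual term. -/
theorem ipm_stationary_le_klTerm_add_residual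
    {X : Type*} [MeasurableSpace X]
    (κhat κstar : Kernel X X) [IsMarkovKernel κhat] [IsMarkovKernel κstar]
    (μhat : Measure X) [IsProbabilityMeasure μhat]
    (h_inv_hat : Kernel.Invariant κhat μhat)
    (μstar : Measure X) [IsProbabilityMeasure μstar]
    (h_inv_star : Kernel.Invariant κstar μstar)
    (μb : Measure X) [IsProbabilityMeasure μb]
    (G : Set (X → ℝ)) (hG_ne : G.Nonempty)
    (hG_meas : ∀ g ∈ G, Measurable g)
    (Gmax : ℝ) (hG_bdd : ∀ g ∈ G, ∀ x, |g x| ≤ Gmax)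
    (Φ : (X → ℝ) → (X → ℝ))
    (hΦ_meas : ∀ g ∈ G, Measurable (Φ g))
    (F : ℝ) (hF : 0 ≤ F) (hΦ_bdd : ∀ g ∈ G, ∀ x, |Φ g x| ≤ F)
    (hΦ_bellman : ∀ g ∈ G, ∀ x,
      Φ g x = g x + (∫ x', Φ g x' ∂(κhat x)) - ∫ z, g z ∂μhat)
    (Ψ : (X → ℝ) → (X → ℝ))
    (hΨ_meas : ∀ g ∈ G, Measurable (Ψ g))
    (hΨ_bdd : ∀ g ∈ G, ∃ C : ℝ, ∀ x, |Ψ g x| ≤ C)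
    (hΨ_bellman : ∀ g ∈ G, ∀ x,
      Ψ g x = ((∫ x', Φ g x' ∂(κhat x)) - ∫ x', Φ g x' ∂(κstar x))
        + (∫ x', Ψ g x' ∂(κstar x))
        - ∫ z, ((∫ x', Φ g x' ∂(κhat z)) - ∫ x', Φ g x' ∂(κstar z)) ∂μstar)
    (h_kl_fin : ∀ᵐ x ∂μb, KLdiv (κstar x) (κhat x) < ⊤)
    (h_kl_int : Integrable
      (fun x => Real.sqrt (2 * (KLdiv (κstar x) (κhat x)).toReal)) μb) :
    (⨆ g : G, |(∫ x, (g : X → ℝ) x ∂μhat) - ∫ x, (g : X → ℝ) x ∂μstar|)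
      ≤ F * (∫ x, Real.sqrt (2 * (KLdiv (κstar x) (κhat x)).toReal) ∂μb)
        + ⨆ g : G, |(∫ x, Ψ g x ∂μb) - ∫ x, ∫ x', Ψ (g : X → ℝ) x' ∂(κstar x) ∂μb| := by
  haveI : Nonempty ↥G := hG_ne.to_subtype
  set W : ℝ := ∫ x, Real.sqrt (2 * (KLdiv (κstar x) (κhat x)).toReal) ∂μb with hW
  have main : ∀ g ∈ G,
      |(∫ x, g x ∂μhat) - ∫ x, g x ∂μstar|
        ≤ F * W + |(∫ x, Ψ g x ∂μb) - ∫ x, ∫ x', Ψ g x' ∂(κstar x) ∂μb|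
      ∧ |(∫ x, Ψ g x ∂μb) - ∫ x, ∫ x', Ψ g x' ∂(κstar x) ∂μb| ≤ 4 * F := by
    intro g hg
    obtain ⟨C, hC⟩ := hΨ_bdd g hg
    have hgm := hG_meas g hg
    have hΦm := hΦ_meas g hg
    have hΨm := hΨ_meas g hg
    have hΦb := hΦ_bdd g hg
    set Kh : X → ℝ := fun x => ∫ y, Φ g y ∂κhat x with hKh
    set Ks : X → ℝ := fun x => ∫ y, Φ g y ∂κstar x with hKs
    set KS : X → ℝ := fun x => ∫ y, Ψ g y ∂κstar x with hKS
    have hKhm : Measurable Kh := measurable_kernel_integral κhat hΦm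
    have hKsm : Measurable Ks := measurable_kernel_integral κstar hΦm
    have hKSm : Measurable KS := measurable_kernel_integral κstar hΨm
    have hKhb : ∀ x, |Kh x| ≤ F := abs_kernel_integral_le κhat hΦb
    have hKsb : ∀ x, |Ks x| ≤ F := abs_kernel_integral_le κstar hΦb
    have hKSb : ∀ x, |KS x| ≤ C := abs_kernel_integral_le κstar hC
    have heb : ∀ x, |Kh x - Ks x| ≤ 2 * F := fun x =>
      (abs_sub _ _).trans (by linarith [hKhb x, hKsb x])
    have hem : Measurable fun x => Kh x - Ks x := hKhm.sub hKsm
    -- identity 1 : ∫ g dμhat - ∫ g dμstar = ∫ (Kh - Ks) dμstar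
    have hid1 : (∫ x, g x ∂μhat) - ∫ x, g x ∂μstar = ∫ x, (Kh x - Ks x) ∂μstar := by
      have hintg : Integrable g μstar := integrable_of_abs_le' hgm (hG_bdd g hg)
      have hintKh : Integrable Kh μstar := integrable_of_abs_le' hKhm hKhb
      have hintKs : Integrable Ks μstar := integrable_of_abs_le' hKsm hKsb
      have h1 : ∫ x, Φ g x ∂μstar
          = ∫ x, (g x + Kh x - ∫ z, g z ∂μhat) ∂μstar :=
        integral_congr_ae (Filter.Eventually.of_forall (hΦ_bellman g hg))
      have hsum : Integrable (fun x => g x + Kh x) μstar := hintg.add hintKh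
      rw [integral_sub hsum (integrable_const _), integral_add hintg hintKh,
        integral_const] at h1
      have h2 : ∫ x, Ks x ∂μstar = ∫ x, Φ g x ∂μstar :=
        integral_invariant h_inv_star hΦm hΦb
      rw [integral_sub hintKh hintKs, h2, h1]
      simp only [probReal_univ, ENNReal.toReal_one, one_smul]
      ring
    -- identity 2 (integrate Ψ-Bellman over μb)
    set d : ℝ := ∫ z, (Kh z - Ks z) ∂μstar with hd
    have hid2 : (∫ x, Ψ g x ∂μb) - ∫ x, KS x ∂μb = (∫ x, (Kh x - Ks x) ∂μb) - d := by
      have hintΨ : Integrable (Ψ g) μb := integrable_of_abs_le' hΨm hC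
      have hintKS : Integrable KS μb := integrable_of_abs_le' hKSm hKSb
      have hinte : Integrable (fun x => Kh x - Ks x) μb := integrable_of_abs_le' hem heb
      have h1 : ∫ x, Ψ g x ∂μb = ∫ x, ((Kh x - Ks x) + KS x - d) ∂μb :=
        integral_congr_ae (Filter.Eventually.of_forall (hΨ_bellman g hg))
      have hsum : Integrable (fun x => (Kh x - Ks x) + KS x) μb := hinte.add hintKS
      rw [integral_sub hsum (integrable_const _), integral_add hinte hintKS,
        integral_const] at h1
      rw [h1]
      simp [measure_univ]
      ring
    -- Pinsker bound on ∫ |Kh - Ks| dμb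
    have hpinsker : ∫ x, |Kh x - Ks x| ∂μb ≤ F * W := by
      have hae : ∀ᵐ x ∂μb, |Kh x - Ks x|
          ≤ F * Real.sqrt (2 * (KLdiv (κstar x) (κhat x)).toReal) := by
        filter_upwards [h_kl_fin] with x hx
        obtain ⟨hac, hi⟩ := KLdiv_lt_top_elim hx
        have := pinsker_bound (κstar x) (κhat x) hac hi hΦm hF hΦb
        rw [abs_sub_comm] at this
        exact this
      have := integral_mono_ae (integrable_of_abs_le' hem.abs
          (C := 2 * F) (fun x => by rw [abs_abs]; exact heb x))
        (h_kl_int.const_mul F) hae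
      calc ∫ x, |Kh x - Ks x| ∂μb
          ≤ ∫ x, F * Real.sqrt (2 * (KLdiv (κstar x) (κhat x)).toReal) ∂μb := this
        _ = F * W := by rw [hW, integral_const_mul]
    have habse : |∫ x, (Kh x - Ks x) ∂μb| ≤ ∫ x, |Kh x - Ks x| ∂μb := by
      simpa [Real.norm_eq_abs] using
        norm_integral_le_integral_norm (μ := μb) (fun x => Kh x - Ks x)
    have habsd : |d| ≤ 2 * F := by
      rw [hd]
      have := norm_integral_le_of_norm_le_const (μ := μstar)
        (f := fun z => Kh z - Ks z) (C := 2 * F)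
        (Filter.Eventually.of_forall fun z => by simpa [Real.norm_eq_abs] using heb z)
      simpa [Real.norm_eq_abs, measure_univ] using this
    have habsint : |∫ x, (Kh x - Ks x) ∂μb| ≤ 2 * F := by
      have := norm_integral_le_of_norm_le_const (μ := μb)
        (f := fun z => Kh z - Ks z) (C := 2 * F)
        (Filter.Eventually.of_forall fun z => by simpa [Real.norm_eq_abs] using heb z)
      simpa [Real.norm_eq_abs, measure_univ] using this
    constructor
    · rw [hid1]
      have : d = (∫ x, (Kh x - Ks x) ∂μb)
          - ((∫ x, Ψ g x ∂μb) - ∫ x, KS x ∂μb) := by linarith [hid2]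
      rw [this]
      calc |(∫ x, (Kh x - Ks x) ∂μb) - ((∫ x, Ψ g x ∂μb) - ∫ x, KS x ∂μb)|
          ≤ |∫ x, (Kh x - Ks x) ∂μb| + |(∫ x, Ψ g x ∂μb) - ∫ x, KS x ∂μb| :=
            abs_sub _ _
        _ ≤ F * W + |(∫ x, Ψ g x ∂μb) - ∫ x, KS x ∂μb| :=
            add_le_add_left (habse.trans hpinsker) _
    · rw [hid2]
      calc |(∫ x, (Kh x - Ks x) ∂μb) - d|
          ≤ |∫ x, (Kh x - Ks x) ∂μb| + |d| := abs_sub _ _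
        _ ≤ 2 * F + 2 * F := add_le_add habsint habsd
        _ = 4 * F := by ring
  have hbdd : BddAbove (Set.range fun g : G =>
      |(∫ x, Ψ g x ∂μb) - ∫ x, ∫ x', Ψ (g : X → ℝ) x' ∂(κstar x) ∂μb|) := by
    refine ⟨4 * F, ?_⟩
    rintro y ⟨g, rfl⟩
    exact (main g g.2).2
  refine ciSup_le fun g => ?_
  exact (main g g.2).1.trans (add_le_add_right (le_ciSup hbdd g) _)
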